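/- Let A₀ and A₁ be unital C*-algebras and let I(A₀,A₁) = { f ∈ C([0,1], A₀ ⊗ A₁) : f(0) ∈ A₀ ⊗ 1 and f(1) ∈ 1 ⊗ A₁ }. If both A₀ and A₁ contain the matrix algebra M_k unitally (i.e., there exist unital *-homomorphisms M_k → A₀ and M_k → A₁), then I(A₀,A₁) also contains M_k unitally. -/

import Mathlib

/-- Let `A₀`, `A₁` be unital C*-algebras, and realize a C*-tensor product
`A₀ ⊗ A₁` as a unital C*-algebra `B` together with commuting unital embeddings
`ι₀ : A₀ → B`, `ι₁ : A₁ → B`.  Let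
`I(A₀, A₁) = {f ∈ C([0,1], B) : f 0 ∈ ι₀(A₀), f 1 ∈ ι₁(A₁)}` be the generalized
dimension drop algebra.  If both `A₀` and `A₁` contain `M_k` unitally, then
`I(A₀, A₁)` contains `M_k` unitally, i.e. there is an injective unital *-homomorphism
`Φ : M_k → C([0,1], B)` whose image lies in `I(A₀, A₁)`. -/
theorem statement0
    (A₀ A₁ B : Type) [CStarAlgebra A₀] [CStarAlgebra A₁] [CStarAlgebra B] [Nontrivial B]
    (ι₀ : A₀ →⋆ₐ[ℂ] B) (ι₁ : A₁ →⋆ₐ[ℂ] B)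
    (hι₀ : Function.Injective ι₀) (hι₁ : Function.Injective ι₁)
    (hcomm : ∀ (a₀ : A₀) (a₁ : A₁), Commute (ι₀ a₀) (ι₁ a₁))
    (k : ℕ) (hk : 0 < k)
    (Φ₀ : Matrix (Fin k) (Fin k) ℂ →⋆ₐ[ℂ] A₀)
    (Φ₁ : Matrix (Fin k) (Fin k) ℂ →⋆ₐ[ℂ] A₁)
    (hΦ₀ : Function.Injective Φ₀) (hΦ₁ : Function.Injective Φ₁) :
    ∃ Φ : Matrix (Fin k) (Fin k) ℂ →⋆ₐ[ℂ] C(unitInterval, B),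
      Function.Injective Φ ∧
      ∀ x : Matrix (Fin k) (Fin k) ℂ,
        Φ x 0 ∈ Set.range ι₀ ∧ Φ x 1 ∈ Set.range ι₁ := by
  classical
  have _hM : True := trivial
  set a : Matrix (Fin k) (Fin k) ℂ →⋆ₐ[ℂ] B := ι₀.comp Φ₀ with ha
  set b : Matrix (Fin k) (Fin k) ℂ →⋆ₐ[ℂ] B := ι₁.comp Φ₁ with hb
  have hab : ∀ m n : Matrix (Fin k) (Fin k) ℂ, a m * b n = b n * a m := fun m n => hcomm (Φ₀ m) (Φ₁ n)
  -- matrix units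
  set e : Fin k → Fin k → Matrix (Fin k) (Fin k) ℂ := fun i j => Matrix.single i j 1 with he
  have he_mul : ∀ i j p q, e i j * e p q = if j = p then e i q else 0 := by
    intro i j p q
    by_cases h : j = p
    · subst h
      simp [he, Matrix.single_mul_single_same]
    · rw [if_neg h]
      exact Matrix.single_mul_single_of_ne (c := 1) i j p h 1
  have he_star : ∀ i j, star (e i j) = e j i := by
    intro i j
    ext p q
    simp [he, Matrix.single, Matrix.star_apply, and_comm]
  have he_sum : ∑ i : Fin k, e i i = (1 : Matrix (Fin k) (Fin k) ℂ) := by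
    ext p q
    by_cases h : p = q
    · subst h
      simp [he, Matrix.sum_apply, Matrix.single, Matrix.one_apply]
    · simp only [he, Matrix.sum_apply, Matrix.single, Matrix.one_apply,
        Matrix.of_apply, Finset.sum_ite_eq, if_neg h, Finset.sum_boole]
      rw [Finset.filter_eq_empty_iff.2]
      · simp
      · rintro i - ⟨rfl, rfl⟩
        exact h rfl
  have he_smul : ∀ (i j) (c : ℂ), Matrix.single i j c = c • e i j := by
    intro i j c
    ext p q
    simp [he, Matrix.single, Matrix.smul_apply, mul_ite]
  -- the flip unitary
  set w : B := ∑ i : Fin k, ∑ j : Fin k, a (e i j) * b (e j i) with hw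
  -- key computation on matrix units
  have step1 : ∀ p q, w * a (e p q) = ∑ i : Fin k, a (e i q) * b (e p i) := by
    intro p q
    rw [hw, Finset.sum_mul]
    refine Finset.sum_congr rfl fun i _ => ?_
    rw [Finset.sum_mul]
    have : ∀ j : Fin k, a (e i j) * b (e j i) * a (e p q)
        = if j = p then a (e i q) * b (e p i) else 0 := by
      intro j
      rw [mul_assoc, ← hab, ← mul_assoc, ← map_mul, he_mul]
      by_cases h : j = p
      · subst h; simp
      · simp [h]
    rw [Finset.sum_congr rfl fun j _ => this j, Finset.sum_ite_eq' _ p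
      (fun j => a (e i q) * b (e p i))]
    simp
  have keyE : ∀ p q, w * a (e p q) * w = b (e p q) := by
    intro p q
    rw [step1, hw, Finset.sum_mul]
    have h1 : ∀ i : Fin k, (a (e i q) * b (e p i)) * (∑ x : Fin k, ∑ y : Fin k,
        a (e x y) * b (e y x)) = a (e i i) * b (e p q) := by
      intro i
      rw [Finset.mul_sum]
      have h2 : ∀ x : Fin k, (a (e i q) * b (e p i)) * (∑ y : Fin k, a (e x y) * b (e y x))
          = if q = x then a (e i i) * b (e p q) else 0 := by
        intro x
        rw [Finset.mul_sum]
        have h3 : ∀ y : Fin k, (a (e i q) * b (e p i)) * (a (e x y) * b (e y x))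
            = if q = x then (if i = y then a (e i y) * b (e p q) else 0) else 0 := by
          intro y
          have : (a (e i q) * b (e p i)) * (a (e x y) * b (e y x))
              = (a (e i q) * a (e x y)) * (b (e p i) * b (e y x)) := by
            rw [mul_assoc, ← mul_assoc (b (e p i)), ← hab, mul_assoc, ← mul_assoc]
          rw [this, ← map_mul, ← map_mul, he_mul, he_mul]
          by_cases hqx : q = x
          · subst hqx
            by_cases hiy : i = y
            · subst hiy; simp
            · simp [hiy, Ne.symm hiy]
          · simp [hqx]
        rw [Finset.sum_congr rfl fun y _ => h3 y]
        by_cases hqx : q = x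
        · subst hqx
          simp only [if_true]
          rw [Finset.sum_ite_eq _ i (fun y => a (e i y) * b (e p q))]
          simp
        · simp [hqx]
      rw [Finset.sum_congr rfl fun x _ => h2 x, Finset.sum_ite_eq _ q
        (fun _ => a (e i i) * b (e p q))]
      simp
    rw [Finset.sum_congr rfl fun i _ => h1 i, ← Finset.sum_mul, ← map_sum, he_sum, map_one,
      one_mul]
  -- key computation in general
  have key : ∀ x : Matrix (Fin k) (Fin k) ℂ, w * a x * w = b x := by
    intro x
    induction x using Matrix.induction_on' with
    | h_zero => rw [map_zero, map_zero, mul_zero, zero_mul]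
    | h_add p q hp hq => rw [map_add, map_add, mul_add, add_mul, hp, hq]
    | h_std_basis i j c =>
        rw [he_smul i j c, map_smul, map_smul, mul_smul_comm, smul_mul_assoc, keyE]
  have hw_star : star w = w := by
    rw [hw]
    rw [star_sum]
    rw [Finset.sum_comm]
    refine Finset.sum_congr rfl fun j _ => ?_
    rw [star_sum]
    refine Finset.sum_congr rfl fun i _ => ?_
    rw [star_mul, ← map_star, ← map_star, he_star, he_star, hab]
  have hww : w * w = 1 := by
    have := key 1
    rw [map_one, map_one, mul_one] at this
    exact this
  clear_value w
  -- the projection p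
  set P : B := (2 : ℂ)⁻¹ • (1 - w) with hP
  have hP_star : star P = P := by
    rw [hP, star_smul, star_sub, star_one, hw_star]
    norm_num
  have h1w : (1 - w) * (1 - w) = (2 : ℂ) • (1 - w) := by
    rw [sub_mul, mul_sub, mul_sub, one_mul, one_mul, mul_one, hww]
    rw [two_smul]
    abel
  have hPP : P * P = P := by
    rw [hP, smul_mul_assoc, mul_smul_comm, h1w, smul_smul, smul_smul]
    norm_num
  -- the scalar path
  set lam : unitInterval → ℂ :=
    fun t => Complex.exp ((Real.pi : ℂ) * ((t : ℝ) : ℂ) * Complex.I) - 1 with hlamdef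
  have hlam_c : ∀ t, star (Complex.exp ((Real.pi : ℂ) * ((t : ℝ) : ℂ) * Complex.I)) *
      Complex.exp ((Real.pi : ℂ) * ((t : ℝ) : ℂ) * Complex.I) = 1 := by
    intro t
    have hconj : (starRingEnd ℂ) ((Real.pi : ℂ) * ((t : ℝ) : ℂ) * Complex.I)
        = -((Real.pi : ℂ) * ((t : ℝ) : ℂ) * Complex.I) := by
      simp [map_mul, Complex.conj_ofReal, Complex.conj_I]
    have : star (Complex.exp ((Real.pi : ℂ) * ((t : ℝ) : ℂ) * Complex.I))
        = Complex.exp (-((Real.pi : ℂ) * ((t : ℝ) : ℂ) * Complex.I)) := by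
      rw [← hconj]
      exact (Complex.exp_conj _).symm
    rw [this, ← Complex.exp_add, neg_add_cancel, Complex.exp_zero]
  have hlam : ∀ t, star (lam t) + lam t + star (lam t) * lam t = 0 := by
    intro t
    have hc := hlam_c t
    set c := Complex.exp ((Real.pi : ℂ) * ((t : ℝ) : ℂ) * Complex.I)
    have : star (lam t) = star c - 1 := by
      rw [hlamdef]; simp [star_sub]; rfl
    rw [this, hlamdef]
    simp only
    linear_combination hc
  have hlam0 : lam 0 = 0 := by
    rw [hlamdef]
    simp
  have hlam1 : lam 1 = -2 := by
    rw [hlamdef]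
    simp only [Set.Icc.coe_one, Complex.ofReal_one, mul_one]
    rw [Complex.exp_pi_mul_I]
    norm_num
  -- the unitary path
  have hu_cont : Continuous fun t : unitInterval => (1 : B) + lam t • P := by
    refine continuous_const.add (Continuous.smul ?_ continuous_const)
    rw [hlamdef]
    exact (Complex.continuous_exp.comp (by fun_prop)).sub continuous_const
  set u : C(unitInterval, B) := ⟨fun t => (1 : B) + lam t • P, hu_cont⟩ with hu
  clear_value u
  have hu_apply : ∀ t, u t = (1 : B) + lam t • P := by
    intro t
    rw [hu]
    rfl
  have hstar_u_apply : ∀ t, (star u) t = (1 : B) + star (lam t) • P := by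
    intro t
    rw [ContinuousMap.star_apply, hu_apply, star_add, star_one, star_smul, hP_star]
  have hmul_gen : ∀ (d l : ℂ), d + l + d * l = 0 →
      ((1 : B) + d • P) * ((1 : B) + l • P) = 1 := by
    intro d l h
    have expand : ((1 : B) + d • P) * ((1 : B) + l • P) = 1 + (d + l + d * l) • P := by
      rw [add_mul, mul_add, mul_add, one_mul, one_mul, mul_one, smul_mul_smul_comm, hPP,
        add_smul, add_smul]
      abel
    rw [expand, h, zero_smul, add_zero]
  have hu_star_mul : star u * u = 1 := by
    ext t
    rw [ContinuousMap.mul_apply, hstar_u_apply, hu_apply, ContinuousMap.one_apply]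
    exact hmul_gen _ _ (by linear_combination hlam t)
  have hu_mul_star : u * star u = 1 := by
    ext t
    rw [ContinuousMap.mul_apply, hstar_u_apply, hu_apply, ContinuousMap.one_apply]
    refine hmul_gen _ _ ?_
    have := hlam t
    linear_combination this
  -- the constant embedding composed with a
  set cst : B → C(unitInterval, B) := fun x => ContinuousMap.const unitInterval x with hcst
  have hcst_mul : ∀ x y : B, cst (x * y) = cst x * cst y := fun x y => rfl
  have hcst_add : ∀ x y : B, cst (x + y) = cst x + cst y := fun x y => rfl
  have hcst_star : ∀ x : B, cst (star x) = star (cst x) := fun x => rfl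
  have hcst_one : cst 1 = 1 := rfl
  have cancel : ∀ X Y : C(unitInterval, B),
      (u * X * star u) * (u * Y * star u) = u * (X * Y) * star u := by
    intro X Y
    calc (u * X * star u) * (u * Y * star u)
        = u * X * ((star u * u) * (Y * star u)) := by simp only [mul_assoc]
      _ = u * (X * Y) * star u := by
          rw [hu_star_mul, one_mul]
          simp only [mul_assoc]
  -- the homomorphism
  set Φ : Matrix (Fin k) (Fin k) ℂ →⋆ₐ[ℂ] C(unitInterval, B) :=
    { toFun := fun x => u * cst (a x) * star u
      map_one' := by
        show u * cst (a 1) * star u = 1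
        rw [map_one, hcst_one, mul_one, hu_mul_star]
      map_mul' := by
        intro x y
        show u * cst (a (x * y)) * star u
            = (u * cst (a x) * star u) * (u * cst (a y) * star u)
        rw [map_mul, hcst_mul, cancel]
      map_zero' := by
        show u * cst (a 0) * star u = 0
        rw [map_zero, show cst (0 : B) = 0 from rfl, mul_zero, zero_mul]
      map_add' := by
        intro x y
        show u * cst (a (x + y)) * star u
            = u * cst (a x) * star u + u * cst (a y) * star u
        rw [map_add, hcst_add, mul_add, add_mul]
      commutes' := by
        intro r
        show u * cst (a ((algebraMap ℂ (Matrix (Fin k) (Fin k) ℂ)) r)) * star u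
            = (algebraMap ℂ C(unitInterval, B)) r
        rw [AlgHomClass.commutes]
        have h1 : cst ((algebraMap ℂ B) r) = (algebraMap ℂ C(unitInterval, B)) r := rfl
        rw [h1, Algebra.algebraMap_eq_smul_one, mul_smul_comm, smul_mul_assoc, mul_one,
          hu_mul_star]
      map_star' := by
        intro x
        show u * cst (a (star x)) * star u = star (u * cst (a x) * star u)
        rw [map_star, hcst_star]
        exact (by ext t; simp only [ContinuousMap.star_apply, ContinuousMap.mul_apply, star_mul,
            star_star, mul_assoc] :
          star (u * cst (a x) * star u) = u * star (cst (a x)) * star u).symm } with hΦ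
  have hΦ_apply : ∀ (x : Matrix (Fin k) (Fin k) ℂ) (t : unitInterval), Φ x t = u t * a x * (star u) t := by
    intro x t
    show (u * cst (a x) * star u) t = _
    rw [ContinuousMap.mul_apply, ContinuousMap.mul_apply]
    rfl
  have hu0 : u 0 = 1 := by
    rw [hu_apply, hlam0, zero_smul, add_zero]
  have hu1 : u 1 = w := by
    have h2 : ((-2 : ℂ)) * (2 : ℂ)⁻¹ = -1 := by norm_num
    rw [hu_apply, hlam1, hP, smul_smul, h2, neg_one_smul, neg_sub]
    abel
  have hΦ0 : ∀ x : Matrix (Fin k) (Fin k) ℂ, Φ x 0 = ι₀ (Φ₀ x) := by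
    intro x
    rw [hΦ_apply, ContinuousMap.star_apply, hu0, star_one, one_mul, mul_one]
    rfl
  have hΦ1 : ∀ x : Matrix (Fin k) (Fin k) ℂ, Φ x 1 = ι₁ (Φ₁ x) := by
    intro x
    rw [hΦ_apply, ContinuousMap.star_apply, hu1, hw_star, key x]
    rfl
  refine ⟨Φ, ?_, fun x => ⟨⟨Φ₀ x, (hΦ0 x).symm⟩, ⟨Φ₁ x, (hΦ1 x).symm⟩⟩⟩
  intro x y hxy
  have : ι₀ (Φ₀ x) = ι₀ (Φ₀ y) := by
    rw [← hΦ0, ← hΦ0, hxy]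
  exact hΦ₀ (hι₀ this)
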